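/- Every epistemic-gap-free decision-making mechanism with imperfect information is an elected semi-epistemic dictatorship: if at each leaf node some agent is epistemically responsible, then every root-to-leaf decision path contains a node at which some agent is a semi-epistemic dictator. -/

import Mathlib

inductive Outcome where
  | yes : Outcome
  | no : Outcome
deriving DecidableEq

def Outcome.flip : Outcome → Outcome
  | .yes => .no
  | .no => .yes

/-- A decision-making mechanism (perfect information):
a finite rooted directed tree `(V, E)` with root `root`,
agents `A`, actions `Act`, available-action sets `Δ`,
choice functions `τ`, and a leaf labelling `lab`. -/
structure Mech (V A Act : Type) where
  finV : Fintype V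
  E : V → V → Prop
  root : V
  root_no_parent : ∀ v, ¬ E v root
  unique_parent : ∀ u v w, E u w → E v w → u = v
  reach : ∀ v, Relation.ReflTransGen E root v
  Δ : A → V → Set Act
  Δ_nonempty : ∀ a v, (∃ u, E v u) → (Δ a v).Nonempty
  τ : V → (A → Act) → V
  τ_child : ∀ v δ, (∃ u, E v u) → (∀ b, δ b ∈ Δ b v) → E v (τ v δ)
  lab : V → Outcome

namespace Mech

variable {V A Act : Type}

def IsLeaf (M : Mech V A Act) (v : V) : Prop := ∀ u, ¬ M.E v u

def IsDecision (M : Mech V A Act) (v : V) : Prop := ∃ u, M.E v u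

/-- `Next a d v` : the set of children the process can move to from `v`
when agent `a` chooses action `d`. -/
def Next (M : Mech V A Act) (a : A) (d : Act) (v : V) : Set V :=
  { u | ∃ δ : A → Act, (∀ b, δ b ∈ M.Δ b v) ∧ δ a = d ∧ u = M.τ v δ }

/-- `win_a(o)`: the smallest set containing all leaves labelled `o` and
closed under: if `Next a d v ⊆ win_a(o)` for some available action `d`
at a decision node `v`, then `v ∈ win_a(o)`. -/
inductive Win (M : Mech V A Act) (a : A) (o : Outcome) : V → Prop where
  | leaf (v : V) : M.IsLeaf v → M.lab v = o → Win M a o v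
  | step (v : V) (d : Act) : M.IsDecision v → d ∈ M.Δ a v →
      (∀ u ∈ M.Next a d v, Win M a o u) → Win M a o v

/-- A decision path starting at the root. -/
def RootPath (M : Mech V A Act) (l : List V) : Prop :=
  l.head? = some M.root ∧ l.Chain' M.E

/-- Agent `a` is (counterfactually) responsible at leaf `v`. -/
def Responsible (M : Mech V A Act) (a : A) (v : V) : Prop :=
  ∃ l : List V, M.RootPath l ∧ l.getLast? = some v ∧
    ∃ u ∈ l, M.IsDecision u ∧ M.Win a (M.lab v).flip u

def GapFree (M : Mech V A Act) : Prop :=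
  ∀ v, M.IsLeaf v → ∃ a, M.Responsible a v

def Dictator (M : Mech V A Act) (a : A) (v : V) : Prop :=
  M.Win a Outcome.yes v ∧ M.Win a Outcome.no v

def ElectedDictatorship (M : Mech V A Act) : Prop :=
  ∀ (l : List V) (v : V), M.RootPath l → l.getLast? = some v → M.IsLeaf v →
    ∃ u ∈ l, ∃ a, M.Dictator a u

end Mech

/-- A decision-making mechanism with imperfect information. -/
structure IMech (V A Act : Type) extends Mech V A Act where
  sim : A → V → V → Prop
  sim_equiv : ∀ a, Equivalence (sim a)
  sim_decision : ∀ a u v, sim a u v → ((∃ w, E u w) ↔ (∃ w, E v w))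
  sim_Δ : ∀ a u v, sim a u v → Δ a u = Δ a v

namespace IMech

variable {V A Act : Type}

/-- `Next a d ([v]_a)` : the union of `Next a d u` over all `u ∼_a v`. -/
def NextCl (M : IMech V A Act) (a : A) (d : Act) (v : V) : Set V :=
  { w | ∃ u, M.sim a v u ∧ w ∈ M.toMech.Next a d u }

/-- `ewin_a(o)`. -/
inductive EWin (M : IMech V A Act) (a : A) (o : Outcome) : V → Prop where
  | leaf (v : V) : M.toMech.IsLeaf v → M.lab v = o → EWin M a o v
  | known (v : V) (d : Act) : M.toMech.IsDecision v → d ∈ M.Δ a v →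
      (∀ w ∈ M.NextCl a d v, EWin M a o w) → EWin M a o v
  | blind (v : V) : M.toMech.IsDecision v →
      (∀ d ∈ M.Δ a v, ∀ w ∈ M.toMech.Next a d v, EWin M a o w) → EWin M a o v

/-- `uwin_a(o)`. -/
inductive UWin (M : IMech V A Act) (a : A) (o : Outcome) : V → Prop where
  | leaf (v : V) : M.toMech.IsLeaf v → M.lab v = o → UWin M a o v
  | known (v : V) (d : Act) : M.toMech.IsDecision v → d ∈ M.Δ a v →
      (∀ w ∈ M.NextCl a d v, UWin M a o w) → UWin M a o v

def EpistemicallyResponsible (M : IMech V A Act) (a : A) (v : V) : Prop :=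
  ∃ l : List V, M.toMech.RootPath l ∧ l.getLast? = some v ∧
    ∃ u ∈ l, M.toMech.IsDecision u ∧ M.EWin a (M.lab v).flip u

def EpistemicGapFree (M : IMech V A Act) : Prop :=
  ∀ v, M.toMech.IsLeaf v → ∃ a, M.EpistemicallyResponsible a v

def EpistemicDictator (M : IMech V A Act) (a : A) (v : V) : Prop :=
  M.EWin a Outcome.yes v ∧ M.EWin a Outcome.no v

def ElectedEpistemicDictatorship (M : IMech V A Act) : Prop :=
  ∀ (l : List V) (v : V), M.toMech.RootPath l → l.getLast? = some v →
    M.toMech.IsLeaf v → ∃ u ∈ l, ∃ a, M.EpistemicDictator a u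

def SemiEpistemicDictator (M : IMech V A Act) (a : A) (v : V) : Prop :=
  ∃ o : Outcome, M.EWin a o v ∧ M.toMech.Win a o.flip v

def ElectedSemiEpistemicDictatorship (M : IMech V A Act) : Prop :=
  ∀ (l : List V) (v : V), M.toMech.RootPath l → l.getLast? = some v →
    M.toMech.IsLeaf v → ∃ u ∈ l, ∃ a, M.SemiEpistemicDictator a u

end IMech


section Aux

namespace Mech

variable {V A Act : Type}

theorem acyc (M : Mech V A Act) : ∀ x, ¬ Relation.TransGen M.E x x := by
  intro x
  induction M.reach x with
  | refl =>
      intro hcyc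
      cases hcyc with
      | single h => exact M.root_no_parent _ h
      | tail _ h => exact M.root_no_parent _ h
  | @tail b c _ hE ih =>
      intro hcyc
      cases hcyc with
      | single hcc =>
          have hb : c = b := M.unique_parent c b c hcc hE
          exact ih (hb ▸ Relation.TransGen.single hcc)
      | tail h1 h2 =>
          rename_i y
          have hb : y = b := M.unique_parent y b c h2 hE
          exact ih (Relation.TransGen.head hE (hb ▸ h1))

theorem wf_down (M : Mech V A Act) : WellFounded (fun c p : V => M.E p c) := by
  haveI := M.finV
  haveI : IsTrans V (fun c p : V => Relation.TransGen M.E p c) :=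
    ⟨fun _ _ _ h1 h2 => h2.trans h1⟩
  haveI : IsIrrefl V (fun c p : V => Relation.TransGen M.E p c) :=
    ⟨fun a h => M.acyc a h⟩
  exact Subrelation.wf (fun h => Relation.TransGen.single h)
    (Finite.wellFounded_of_trans_of_irrefl _)

theorem wf_up (M : Mech V A Act) :
    WellFounded (fun a u : V => Relation.TransGen M.E a u) := by
  haveI := M.finV
  haveI : IsTrans V (fun a u : V => Relation.TransGen M.E a u) :=
    ⟨fun _ _ _ h1 h2 => h1.trans h2⟩
  haveI : IsIrrefl V (fun a u : V => Relation.TransGen M.E a u) :=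
    ⟨fun a h => M.acyc a h⟩
  exact Finite.wellFounded_of_trans_of_irrefl _

theorem sibling (M : Mech V A Act) {x a c : V} (hxa : M.E x a) (hxc : M.E x c)
    (h : Relation.ReflTransGen M.E a c) : a = c := by
  rcases h.cases_tail with heq | ⟨z, hz, hzc⟩
  · exact heq.symm
  · have hzx : z = x := M.unique_parent z x c hzc hxc
    exact absurd (Relation.TransGen.head' hxa (hzx ▸ hz)) (M.acyc x)

theorem anc_total (M : Mech V A Act) {a v : V} (hav : Relation.ReflTransGen M.E a v) :
    ∀ b, Relation.ReflTransGen M.E b v →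
      Relation.ReflTransGen M.E a b ∨ Relation.ReflTransGen M.E b a := by
  induction hav using Relation.ReflTransGen.head_induction_on with
  | refl => exact fun b hb => Or.inr hb
  | @head a c hac _ ih =>
      intro b hb
      rcases ih b hb with h | h
      · exact Or.inl (h.head hac)
      · rcases h.cases_tail with heq | ⟨z, hz, hzc⟩
        · subst heq
          exact Or.inl (Relation.ReflTransGen.single hac)
        · have hza : z = a := M.unique_parent z a c hzc hac
          exact Or.inr (hza ▸ hz)

theorem mem_rtg_last (M : Mech V A Act) {v : V} :
    ∀ (l : List V), l.Chain' M.E → l.getLast? = some v → ∀ {u : V}, u ∈ l →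
      Relation.ReflTransGen M.E u v := by
  intro l
  induction l with
  | nil => simp
  | cons a t ih =>
      intro hch hlast u hmem
      cases t with
      | nil =>
          simp only [List.getLast?_singleton, Option.some.injEq] at hlast
          simp only [List.mem_singleton] at hmem
          subst hlast; subst hmem
          exact Relation.ReflTransGen.refl
      | cons b t' =>
          have hab : M.E a b := (List.isChain_cons_cons.mp hch).1
          have hch' : (b :: t').Chain' M.E := (List.isChain_cons_cons.mp hch).2
          have hlast' : (b :: t').getLast? = some v := by
            rw [List.getLast?_cons_cons] at hlast; exact hlast
          rcases List.mem_cons.mp hmem with heq | hmem'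
          · subst heq
            exact (ih hch' hlast' (List.mem_cons_self)).head hab
          · exact ih hch' hlast' hmem'

theorem chain_parent_mem (M : Mech V A Act) {c w : V} :
    ∀ (l : List V), l.Chain' M.E → c ∈ l → M.E w c →
      w ∈ l ∨ l.head? = some c := by
  intro l
  induction l with
  | nil => simp
  | cons a t ih =>
      intro hch hmem hw
      rcases List.mem_cons.mp hmem with heq | hmem'
      · exact Or.inr (by simp [heq])
      · cases t with
        | nil => simp at hmem'
        | cons b t' =>
            have hab : M.E a b := (List.isChain_cons_cons.mp hch).1
            have hch' : (b :: t').Chain' M.E := (List.isChain_cons_cons.mp hch).2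
            rcases ih hch' hmem' hw with h | h
            · exact Or.inl (List.mem_cons_of_mem _ h)
            · have hbc : b = c := by simpa using h
              have : w = a := M.unique_parent w a c hw (hbc ▸ hab)
              exact Or.inl (this ▸ List.mem_cons_self)

theorem anc_mem (M : Mech V A Act) {l : List V} {v w : V} (hl : M.RootPath l)
    (hv : v ∈ l) (h : Relation.ReflTransGen M.E w v) : w ∈ l := by
  induction h using Relation.ReflTransGen.head_induction_on with
  | refl => exact hv
  | @head a c hac _ ih =>
      rcases M.chain_parent_mem l hl.2 ih hac with h | h
      · exact h
      · have hc : c = M.root := by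
          have h2 := h.symm.trans hl.1
          simpa using h2
        exact absurd (hc ▸ hac) (M.root_no_parent a)

end Mech

theorem List.last_mem' {α : Type*} {v : α} :
    ∀ (l : List α), l.getLast? = some v → v ∈ l := by
  intro l
  induction l with
  | nil => simp
  | cons a t ih =>
      intro h
      cases t with
      | nil =>
          simp only [List.getLast?_singleton, Option.some.injEq] at h
          simp [h]
      | cons b t' =>
          rw [List.getLast?_cons_cons] at h
          exact List.mem_cons_of_mem _ (ih h)

namespace IMech

variable {V A Act : Type}

theorem ewin_win (M : IMech V A Act) {b : A} {q : Outcome} {x : V}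
    (h : M.EWin b q x) : M.toMech.Win b q x := by
  induction h with
  | leaf v hl hlab => exact Mech.Win.leaf v hl hlab
  | known v d hdec hd hall ih =>
      exact Mech.Win.step v d hdec hd
        (fun u hu => ih u ⟨v, (M.sim_equiv b).refl v, hu⟩)
  | blind v hdec hall ih =>
      obtain ⟨d, hd⟩ := M.Δ_nonempty b v hdec
      exact Mech.Win.step v d hdec hd (fun u hu => ih d hd u hu)

theorem ewin_leaf_lab (M : IMech V A Act) {b : A} {q : Outcome} {x : V}
    (h : M.EWin b q x) (hleaf : M.toMech.IsLeaf x) : M.lab x = q := by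
  cases h with
  | leaf v _ hlab => exact hlab
  | known v d hdec _ _ => obtain ⟨u, hu⟩ := hdec; exact absurd hu (hleaf u)
  | blind v hdec _ => obtain ⟨u, hu⟩ := hdec; exact absurd hu (hleaf u)

theorem ewin_push (M : IMech V A Act) {b : A} {q : Outcome} {x : V}
    (h : M.EWin b q x) (hdec : M.toMech.IsDecision x) :
    ∃ d ∈ M.Δ b x, ∀ δ : A → Act, (∀ a, δ a ∈ M.Δ a x) → δ b = d →
      M.EWin b q (M.τ x δ) := by
  cases h with
  | leaf v hl _ => obtain ⟨u, hu⟩ := hdec; exact absurd hu (hl u)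
  | known v d _ hd hall =>
      exact ⟨d, hd, fun δ hδ hδb =>
        hall _ ⟨x, (M.sim_equiv b).refl x, δ, hδ, hδb, rfl⟩⟩
  | blind v _ hall =>
      obtain ⟨d, hd⟩ := M.Δ_nonempty b x hdec
      exact ⟨d, hd, fun δ hδ _ => hall (δ b) (hδ b) _ ⟨δ, hδ, rfl, rfl⟩⟩

theorem notWin_step (M : IMech V A Act) {b : A} {q : Outcome} {x : V}
    (h : ¬ M.toMech.Win b q x) (hdec : M.toMech.IsDecision x) (d : Act)
    (hd : d ∈ M.Δ b x) :
    ∃ c ∈ M.toMech.Next b d x, ¬ M.toMech.Win b q c := by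
  by_contra hc
  push_neg at hc
  exact h (Mech.Win.step x d hdec hd hc)

theorem no_opposite (M : IMech V A Act) :
    ∀ x : V, ∀ b b' : A, ∀ q : Outcome, b ≠ b' →
      M.EWin b q x → M.EWin b' q.flip x → False := by
  refine fun x => WellFounded.induction M.toMech.wf_down
    (C := fun x => ∀ b b' q, b ≠ b' → M.EWin b q x → M.EWin b' q.flip x → False) x ?_
  intro x ih b b' q hne h1 h2
  by_cases hdec : M.toMech.IsDecision x
  · obtain ⟨d, hd, p1⟩ := M.ewin_push h1 hdec
    obtain ⟨d', hd', p2⟩ := M.ewin_push h2 hdec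
    classical
    set δ : A → Act := fun a =>
      if a = b then d else if a = b' then d' else (M.Δ_nonempty a x hdec).choose with hδdef
    have hδ : ∀ a, δ a ∈ M.Δ a x := by
      intro a
      by_cases hab : a = b
      · subst hab; simpa [hδdef] using hd
      · by_cases hab' : a = b'
        · subst hab'; simpa [hδdef, hab] using hd'
        · simpa [hδdef, hab, hab'] using (M.Δ_nonempty a x hdec).choose_spec
    have hδb : δ b = d := by simp [hδdef]
    have hδb' : δ b' = d' := by simp [hδdef, (Ne.symm hne)]
    have hxc : M.E x (M.τ x δ) := M.τ_child x δ hdec hδ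
    exact ih (M.τ x δ) hxc b b' q hne (p1 δ hδ hδb) (p2 δ hδ hδb')
  · have hleaf : M.toMech.IsLeaf x := fun u hu => hdec ⟨u, hu⟩
    have e1 := M.ewin_leaf_lab h1 hleaf
    have e2 := M.ewin_leaf_lab h2 hleaf
    rw [e1] at e2
    cases q <;> simp [Outcome.flip] at e2

theorem descend (M : IMech V A Act) :
    ∀ x : V, ∀ b : A, ∀ q : Outcome, M.EWin b q x → ¬ M.toMech.Win b q.flip x →
      ∃ v₁, M.toMech.IsLeaf v₁ ∧ M.lab v₁ = q ∧
        Relation.ReflTransGen M.E x v₁ ∧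
        ∀ y, Relation.ReflTransGen M.E x y → Relation.ReflTransGen M.E y v₁ →
          M.EWin b q y ∧ ¬ M.toMech.Win b q.flip y := by
  refine fun x => WellFounded.induction M.toMech.wf_down
    (C := fun x => ∀ b q, M.EWin b q x → ¬ M.toMech.Win b q.flip x →
      ∃ v₁, M.toMech.IsLeaf v₁ ∧ M.lab v₁ = q ∧
        Relation.ReflTransGen M.E x v₁ ∧
        ∀ y, Relation.ReflTransGen M.E x y → Relation.ReflTransGen M.E y v₁ →
          M.EWin b q y ∧ ¬ M.toMech.Win b q.flip y) x ?_
  intro x ih b q h1 h2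
  by_cases hdec : M.toMech.IsDecision x
  · obtain ⟨d, hd, push⟩ := M.ewin_push h1 hdec
    obtain ⟨c, hc, hcnw⟩ := M.notWin_step h2 hdec d hd
    obtain ⟨δc, hδc, hδcb, rfl⟩ := hc
    have hce : M.EWin b q (M.τ x δc) := push δc hδc hδcb
    have hxc : M.E x (M.τ x δc) := M.τ_child x δc hdec hδc
    obtain ⟨v₁, hlf, hlab, hrtg, hinv⟩ := ih _ hxc b q hce hcnw
    refine ⟨v₁, hlf, hlab, hrtg.head hxc, ?_⟩
    intro y hxy hyv
    rcases hxy.cases_head with heq | ⟨y', hxy', hy'y⟩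
    · subst heq; exact ⟨h1, h2⟩
    · have hy'v : Relation.ReflTransGen M.E y' v₁ := hy'y.trans hyv
      have hcomp := M.toMech.anc_total hy'v _ hrtg
      have hy'c : y' = M.τ x δc := by
        rcases hcomp with h | h
        · exact M.toMech.sibling hxy' hxc h
        · exact (M.toMech.sibling hxc hxy' h).symm
      exact hinv y (hy'c ▸ hy'y) hyv
  · have hleaf : M.toMech.IsLeaf x := fun u hu => hdec ⟨u, hu⟩
    refine ⟨x, hleaf, M.ewin_leaf_lab h1 hleaf, Relation.ReflTransGen.refl, ?_⟩
    intro y hxy _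
    rcases hxy.cases_head with heq | ⟨y', hxy', _⟩
    · subst heq; exact ⟨h1, h2⟩
    · exact absurd hxy' (hleaf y')

theorem main (M : IMech V A Act) (h : M.EpistemicGapFree) :
    ∀ x : V, ∀ b : A, ∀ q : Outcome, M.EWin b q x →
      ∃ w, Relation.ReflTransGen M.E w x ∧ ∃ a, M.SemiEpistemicDictator a w := by
  refine fun x => WellFounded.induction M.toMech.wf_up
    (C := fun x => ∀ b q, M.EWin b q x →
      ∃ w, Relation.ReflTransGen M.E w x ∧ ∃ a, M.SemiEpistemicDictator a w) x ?_
  intro x ih b q hE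
  by_cases hw : M.toMech.Win b q.flip x
  · exact ⟨x, Relation.ReflTransGen.refl, b, q, hE, hw⟩
  · obtain ⟨v₁, hlf, hlab, hrtg, hinv⟩ := M.descend x b q hE hw
    obtain ⟨a, l', hroot', hlast', u₁, hu₁, hu₁dec, hu₁E⟩ := h v₁ hlf
    rw [hlab] at hu₁E
    have hu₁v : Relation.ReflTransGen M.E u₁ v₁ :=
      M.toMech.mem_rtg_last l' hroot'.2 hlast' hu₁
    by_cases htg : Relation.TransGen M.E u₁ x
    · obtain ⟨w, hwu, hdict⟩ := ih u₁ htg a q.flip hu₁E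
      exact ⟨w, hwu.trans htg.to_reflTransGen, hdict⟩
    · have hxu : Relation.ReflTransGen M.E x u₁ := by
        rcases M.toMech.anc_total hrtg u₁ hu₁v with hxu | hux
        · exact hxu
        · rcases Relation.reflTransGen_iff_eq_or_transGen.mp hux with heq | h'
          · subst heq; exact Relation.ReflTransGen.refl
          · exact absurd h' htg
      exfalso
      obtain ⟨hEq, hnW⟩ := hinv u₁ hxu hu₁v
      by_cases hba : b = a
      · subst hba; exact hnW (M.ewin_win hu₁E)
      · exact M.no_opposite u₁ b a q hba hEq hu₁E

end IMech

end Aux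

theorem stmt7 {V A Act : Type} (M : IMech V A Act)
    (h : M.EpistemicGapFree) : M.ElectedSemiEpistemicDictatorship := by
  intro l v hroot hlast hleaf
  obtain ⟨a, l', hroot', hlast', u, hu, hudec, huE⟩ := h v hleaf
  obtain ⟨w, hwu, hdict⟩ := M.main h u a _ huE
  have huv : Relation.ReflTransGen M.E u v :=
    M.toMech.mem_rtg_last l' hroot'.2 hlast' hu
  have hwv : Relation.ReflTransGen M.E w v := hwu.trans huv
  have hvl : v ∈ l := List.last_mem' l hlast
  exact ⟨w, M.toMech.anc_mem hroot hvl hwv, hdict⟩
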